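/- Let n ≥ 8 and let S = {x_1,...,x_n} be an (n−7)-fold GCD closed set of positive integers. Then the LCM matrix [S] is nonsingular. -/

import Mathlib

open scoped Classical
open Finset

namespace S12aux

lemma inv_half_le {a b : ℕ} (ha : 0 < a) (hb : 0 < b) (hd : a ∣ b) (hne : a ≠ b) :
    (b:ℚ)⁻¹ + (b:ℚ)⁻¹ ≤ (a:ℚ)⁻¹ := by
  have h2 : 2 * a ≤ b := by
    obtain ⟨c, rfl⟩ := hd
    rcases c with _ | _ | c
    · omega
    · omega
    · nlinarith
  have haq : (0:ℚ) < (a:ℚ) := by exact_mod_cast ha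
  have hbq : (0:ℚ) < (b:ℚ) := by exact_mod_cast hb
  have h2q : 2 * (a:ℚ) ≤ (b:ℚ) := by exact_mod_cast h2
  rw [inv_eq_one_div, inv_eq_one_div, ← add_div, div_le_div_iff₀ hbq haq]
  nlinarith

lemma inv_lt_inv_nat {a b : ℕ} (ha : 0 < a) (hab : a < b) :
    (b:ℚ)⁻¹ < (a:ℚ)⁻¹ := by
  have haq : (0:ℚ) < (a:ℚ) := by exact_mod_cast ha
  have h : (a:ℚ) < (b:ℚ) := by exact_mod_cast hab
  exact inv_strictAnti₀ haq h

lemma inv_pos_nat {a : ℕ} (ha : 0 < a) : (0:ℚ) < (a:ℚ)⁻¹ := by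
  have : (0:ℚ) < (a:ℚ) := by exact_mod_cast ha
  positivity


noncomputable def alph (x : ℕ → ℕ) : ℕ → ℚ := fun k =>
  (x k : ℚ)⁻¹ - ∑ j ∈ ((Finset.range k).filter (fun j => x j ∣ x k)).attach, alph x j.1
termination_by k => k
decreasing_by exact Finset.mem_range.mp (Finset.mem_filter.mp j.2).1

lemma alph_sum (x : ℕ → ℕ) (k : ℕ) :
    ∑ j ∈ ((Finset.range (k+1)).filter (fun j => x j ∣ x k)), alph x j = (x k : ℚ)⁻¹ := by
  rw [Finset.range_add_one, Finset.filter_insert, if_pos dvd_rfl,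
    Finset.sum_insert (by simp)]
  have h := Finset.sum_attach ((Finset.range k).filter (fun j => x j ∣ x k)) (alph x)
  rw [alph, h]
  ring

lemma ML (x : ℕ → ℕ) (n k : ℕ) (hk : k < n)
    (hpos : ∀ j, j < n → 0 < x j)
    (hmono : ∀ i j, i < j → j < n → x i < x j) :
    ∑ j ∈ ((Finset.range n).filter (fun j => x j ∣ x k)), alph x j = (x k : ℚ)⁻¹ := by
  have hset : (Finset.range n).filter (fun j => x j ∣ x k)
      = (Finset.range (k+1)).filter (fun j => x j ∣ x k) := by
    ext j
    simp only [Finset.mem_filter, Finset.mem_range]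
    constructor
    · rintro ⟨hj, hdvd⟩
      refine ⟨?_, hdvd⟩
      by_contra hjk
      push_neg at hjk
      have h1 := hmono k j (by omega) hj
      have hle := Nat.le_of_dvd (hpos k hk) hdvd
      omega
    · rintro ⟨hj, hdvd⟩
      exact ⟨by omega, hdvd⟩
  rw [hset, alph_sum]

lemma core (P : Finset ℕ) (hP : P.card ≤ 6)
    (hpos : ∀ v ∈ P, 0 < v)
    (hmeet : ∀ a ∈ P, ∀ b ∈ P, Nat.gcd a b ∈ P)
    (m : ℕ) (hm : m ∈ P) (hmdvd : ∀ v ∈ P, m ∣ v)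
    (u : ℕ) (hu : 0 < u) (hudvd : ∀ v ∈ P, v ∣ u) (hune : ∀ v ∈ P, v ≠ u)
    (β : ℕ → ℚ)
    (hsys : ∀ v ∈ P, ∑ w ∈ P.filter (· ∣ v), β w = (v:ℚ)⁻¹) :
    ∑ v ∈ P, β v ≠ (u:ℚ)⁻¹ := by
  classical
  have hupos : (0:ℚ) < (u:ℚ)⁻¹ := inv_pos_nat hu
  set maxes := P.filter (fun d => ∀ w ∈ P, d ∣ w → d = w) with hmaxes
  have hmaxsub : maxes ⊆ P := filter_subset _ _
  have hmaxP : ∀ d ∈ maxes, d ∈ P := fun d hd => hmaxsub hd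
  have hmaxprop : ∀ d ∈ maxes, ∀ w ∈ P, d ∣ w → d = w := by
    intro d hd; exact (mem_filter.mp hd).2
  -- every element divides a maximal element
  have exmax : ∀ v ∈ P, ∃ d ∈ maxes, v ∣ d := by
    have key : ∀ N, ∀ v ∈ P, (P.filter (fun w => v ∣ w)).card ≤ N →
        ∃ d ∈ maxes, v ∣ d := by
      intro N
      induction N with
      | zero =>
        intro v hv hc
        exfalso
        have h1 : v ∈ P.filter (fun w => v ∣ w) := mem_filter.mpr ⟨hv, dvd_rfl⟩
        have := card_pos.mpr ⟨v, h1⟩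
        omega
      | succ N ih =>
        intro v hv hc
        by_cases hmax : ∀ w ∈ P, v ∣ w → v = w
        · exact ⟨v, mem_filter.mpr ⟨hv, hmax⟩, dvd_rfl⟩
        · push_neg at hmax
          obtain ⟨w, hw, hvw, hne⟩ := hmax
          have hsubset : P.filter (fun z => w ∣ z) ⊆ P.filter (fun z => v ∣ z) := by
            intro z hz
            simp only [mem_filter] at *
            exact ⟨hz.1, hvw.trans hz.2⟩
          have hv_not : v ∉ P.filter (fun z => w ∣ z) := by
            simp only [mem_filter, not_and]
            intro _ hwv
            exact hne (Nat.dvd_antisymm hvw hwv)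
          have hlt : (P.filter (fun z => w ∣ z)).card < (P.filter (fun z => v ∣ z)).card :=
            card_lt_card ⟨hsubset, fun hss => hv_not (hss (mem_filter.mpr ⟨hv, dvd_rfl⟩))⟩
          obtain ⟨d, hd, hwd⟩ := ih w hw (by omega)
          exact ⟨d, hd, hvw.trans hwd⟩
    intro v hv
    exact key _ v hv le_rfl
  have hTinter : ∀ v w : ℕ, P.filter (· ∣ v) ∩ P.filter (· ∣ w)
      = P.filter (· ∣ Nat.gcd v w) := by
    intro v w
    ext z
    simp only [mem_inter, mem_filter]
    constructor
    · rintro ⟨⟨hz, h1⟩, ⟨_, h2⟩⟩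
      exact ⟨hz, Nat.dvd_gcd h1 h2⟩
    · rintro ⟨hz, h⟩
      exact ⟨⟨hz, h.trans (Nat.gcd_dvd_left _ _)⟩, ⟨hz, h.trans (Nat.gcd_dvd_right _ _)⟩⟩
  set s := maxes.card with hs
  have hsge1 : 1 ≤ s := by
    obtain ⟨d, hd, _⟩ := exmax m hm
    exact card_pos.mpr ⟨d, hd⟩
  by_cases hs1 : s = 1
  · -- one maximal element
    obtain ⟨d, hd⟩ := card_eq_one.mp hs1
    have hdmax : d ∈ maxes := by rw [hd]; exact mem_singleton_self d
    have hdP : d ∈ P := hmaxP d hdmax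
    have hall : P.filter (· ∣ d) = P := by
      apply Subset.antisymm (filter_subset _ _)
      intro v hv
      obtain ⟨d', hd', hvd⟩ := exmax v hv
      rw [hd, mem_singleton] at hd'
      exact mem_filter.mpr ⟨hv, hd' ▸ hvd⟩
    have hval := hsys d hdP
    rw [hall] at hval
    rw [hval]
    intro hcontra
    have hdu : d < u := lt_of_le_of_ne (Nat.le_of_dvd hu (hudvd d hdP)) (hune d hdP)
    have := inv_lt_inv_nat (hpos d hdP) hdu
    rw [hcontra] at this
    exact lt_irrefl _ this
  by_cases hs2 : s = 2
  · -- two maximal elements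
    obtain ⟨d1, d2, h12, hd⟩ := card_eq_two.mp hs2
    have hd1m : d1 ∈ maxes := by rw [hd]; simp
    have hd2m : d2 ∈ maxes := by rw [hd]; simp
    have hd1P : d1 ∈ P := hmaxP _ hd1m
    have hd2P : d2 ∈ P := hmaxP _ hd2m
    set g := Nat.gcd d1 d2 with hgdef
    have hgP : g ∈ P := hmeet _ hd1P _ hd2P
    have hcover : P = P.filter (· ∣ d1) ∪ P.filter (· ∣ d2) := by
      apply Subset.antisymm
      · intro v hv
        obtain ⟨d', hd', hvd⟩ := exmax v hv
        rw [hd, mem_insert, mem_singleton] at hd'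
        rcases hd' with rfl | rfl
        · exact mem_union_left _ (mem_filter.mpr ⟨hv, hvd⟩)
        · exact mem_union_right _ (mem_filter.mpr ⟨hv, hvd⟩)
      · intro v hv
        rcases mem_union.mp hv with h | h
        · exact (mem_filter.mp h).1
        · exact (mem_filter.mp h).1
    have hIE := Finset.sum_union_inter (s₁ := P.filter (· ∣ d1)) (s₂ := P.filter (· ∣ d2)) (f := β)
    rw [hTinter d1 d2] at hIE
    have hσ : ∑ v ∈ P, β v = (d1:ℚ)⁻¹ + (d2:ℚ)⁻¹ - (g:ℚ)⁻¹ := by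
      rw [hcover]
      rw [hsys d1 hd1P, hsys d2 hd2P, hsys g hgP] at hIE
      linarith
    have hgd1 : g ∣ d1 := Nat.gcd_dvd_left _ _
    have hgd2 : g ∣ d2 := Nat.gcd_dvd_right _ _
    have hgne1 : g ≠ d1 := by
      intro h
      exact h12 (hmaxprop d1 hd1m d2 hd2P (h ▸ hgd2))
    have hgne2 : g ≠ d2 := by
      intro h
      apply h12
      exact (hmaxprop d2 hd2m d1 hd1P (h ▸ hgd1)).symm
    have hb1 := inv_half_le (hpos g hgP) (hpos d1 hd1P) hgd1 hgne1
    have hb2 := inv_half_le (hpos g hgP) (hpos d2 hd2P) hgd2 hgne2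
    intro heq
    rw [hσ] at heq
    linarith
  by_cases hs3 : s = 3
  · -- three maximal elements
    obtain ⟨d1, d2, d3, h12, h13, h23, hd⟩ := card_eq_three.mp hs3
    have hd1m : d1 ∈ maxes := by rw [hd]; simp
    have hd2m : d2 ∈ maxes := by rw [hd]; simp
    have hd3m : d3 ∈ maxes := by rw [hd]; simp
    have hd1P : d1 ∈ P := hmaxP _ hd1m
    have hd2P : d2 ∈ P := hmaxP _ hd2m
    have hd3P : d3 ∈ P := hmaxP _ hd3m
    set a := Nat.gcd d1 d2 with hadef
    set b := Nat.gcd d1 d3 with hbdef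
    set c := Nat.gcd d2 d3 with hcdef
    have haP : a ∈ P := hmeet _ hd1P _ hd2P
    have hbP : b ∈ P := hmeet _ hd1P _ hd3P
    have hcP : c ∈ P := hmeet _ hd2P _ hd3P
    set g := Nat.gcd a c with hgdef
    have hgP : g ∈ P := hmeet _ haP _ hcP
    have hga : g ∣ a := Nat.gcd_dvd_left _ _
    have hgc : g ∣ c := Nat.gcd_dvd_right _ _
    have hgd1 : g ∣ d1 := hga.trans (Nat.gcd_dvd_left _ _)
    have hgd2 : g ∣ d2 := hga.trans (Nat.gcd_dvd_right _ _)
    have hgd3 : g ∣ d3 := hgc.trans (Nat.gcd_dvd_right _ _)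
    have hgb : g ∣ b := Nat.dvd_gcd hgd1 hgd3
    have had1 : a ∣ d1 := Nat.gcd_dvd_left _ _
    have had2 : a ∣ d2 := Nat.gcd_dvd_right _ _
    have hbd1 : b ∣ d1 := Nat.gcd_dvd_left _ _
    have hbd3 : b ∣ d3 := Nat.gcd_dvd_right _ _
    have hcd2 : c ∣ d2 := Nat.gcd_dvd_left _ _
    have hcd3 : c ∣ d3 := Nat.gcd_dvd_right _ _
    -- proper divisibility facts
    have hand1 : a ≠ d1 := fun h => h12 (hmaxprop d1 hd1m d2 hd2P (h ▸ had2))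
    have hand2 : a ≠ d2 := fun h => h12 ((hmaxprop d2 hd2m d1 hd1P (h ▸ had1)).symm)
    have hbnd1 : b ≠ d1 := fun h => h13 (hmaxprop d1 hd1m d3 hd3P (h ▸ hbd3))
    have hbnd3 : b ≠ d3 := fun h => h13 ((hmaxprop d3 hd3m d1 hd1P (h ▸ hbd1)).symm)
    have hcnd2 : c ≠ d2 := fun h => h23 (hmaxprop d2 hd2m d3 hd3P (h ▸ hcd3))
    have hcnd3 : c ≠ d3 := fun h => h23 ((hmaxprop d3 hd3m d2 hd2P (h ▸ hcd2)).symm)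
    -- inclusion–exclusion for sigma
    have hgbc : Nat.gcd b c = g := by
      apply Nat.dvd_antisymm
      · exact Nat.dvd_gcd (Nat.dvd_gcd ((Nat.gcd_dvd_left b c).trans hbd1)
          ((Nat.gcd_dvd_right b c).trans hcd2)) (Nat.gcd_dvd_right b c)
      · exact Nat.dvd_gcd hgb hgc
    have hcover : P = (P.filter (· ∣ d1) ∪ P.filter (· ∣ d2)) ∪ P.filter (· ∣ d3) := by
      apply Subset.antisymm
      · intro v hv
        obtain ⟨d', hd', hvd⟩ := exmax v hv
        rw [hd] at hd'
        simp only [mem_insert, mem_singleton] at hd'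
        rcases hd' with rfl | rfl | rfl
        · exact mem_union_left _ (mem_union_left _ (mem_filter.mpr ⟨hv, hvd⟩))
        · exact mem_union_left _ (mem_union_right _ (mem_filter.mpr ⟨hv, hvd⟩))
        · exact mem_union_right _ (mem_filter.mpr ⟨hv, hvd⟩)
      · intro v hv
        rcases mem_union.mp hv with h | h
        · rcases mem_union.mp h with h' | h'
          · exact (mem_filter.mp h').1
          · exact (mem_filter.mp h').1
        · exact (mem_filter.mp h).1
    have hIE1 := Finset.sum_union_inter (s₁ := P.filter (· ∣ d1)) (s₂ := P.filter (· ∣ d2)) (f := β)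
    rw [hTinter d1 d2, hsys d1 hd1P, hsys d2 hd2P, hsys a haP] at hIE1
    have hIE2 := Finset.sum_union_inter
      (s₁ := P.filter (· ∣ d1) ∪ P.filter (· ∣ d2)) (s₂ := P.filter (· ∣ d3)) (f := β)
    have hdistr : (P.filter (· ∣ d1) ∪ P.filter (· ∣ d2)) ∩ P.filter (· ∣ d3)
        = P.filter (· ∣ b) ∪ P.filter (· ∣ c) := by
      rw [union_inter_distrib_right, hTinter d1 d3, hTinter d2 d3]
    rw [hdistr] at hIE2
    have hIE3 := Finset.sum_union_inter (s₁ := P.filter (· ∣ b)) (s₂ := P.filter (· ∣ c)) (f := β)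
    rw [hTinter b c, hgbc, hsys b hbP, hsys c hcP, hsys g hgP] at hIE3
    rw [hsys d3 hd3P] at hIE2
    have hσ : ∑ v ∈ P, β v
        = (d1:ℚ)⁻¹ + (d2:ℚ)⁻¹ + (d3:ℚ)⁻¹ - (a:ℚ)⁻¹ - (b:ℚ)⁻¹ - (c:ℚ)⁻¹ + (g:ℚ)⁻¹ := by
      rw [hcover]
      linarith
    intro heq
    rw [hσ] at heq
    by_cases hgea : g = a
    · -- bound using b (divides d1, d3) and c (divides d2)
      rw [hgea] at heq
      have hb1 := inv_half_le (hpos b hbP) (hpos d1 hd1P) hbd1 hbnd1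
      have hb3 := inv_half_le (hpos b hbP) (hpos d3 hd3P) hbd3 hbnd3
      have hc2 := inv_half_le (hpos c hcP) (hpos d2 hd2P) hcd2 hcnd2
      have hp2 := inv_pos_nat (hpos d2 hd2P)
      linarith
    by_cases hgeb : g = b
    · rw [hgeb] at heq
      have ha1 := inv_half_le (hpos a haP) (hpos d1 hd1P) had1 hand1
      have ha2 := inv_half_le (hpos a haP) (hpos d2 hd2P) had2 hand2
      have hc3 := inv_half_le (hpos c hcP) (hpos d3 hd3P) hcd3 hcnd3
      have hp3 := inv_pos_nat (hpos d3 hd3P)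
      linarith
    by_cases hgec : g = c
    · rw [hgec] at heq
      have ha1 := inv_half_le (hpos a haP) (hpos d1 hd1P) had1 hand1
      have ha2 := inv_half_le (hpos a haP) (hpos d2 hd2P) had2 hand2
      have hb3 := inv_half_le (hpos b hbP) (hpos d3 hd3P) hbd3 hbnd3
      have hp3 := inv_pos_nat (hpos d3 hd3P)
      linarith
    -- impossible: P would have at least 7 elements
    · exfalso
      have hmg : m ∣ g := hmdvd g hgP
      -- m distinct from d's
      have hmd1 : m ≠ d1 := by
        intro h
        exact h12 (hmaxprop d1 hd1m d2 hd2P (h ▸ hmdvd d2 hd2P))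
      have hmd2 : m ≠ d2 := by
        intro h
        exact h23 (hmaxprop d2 hd2m d3 hd3P (h ▸ hmdvd d3 hd3P))
      have hmd3 : m ≠ d3 := by
        intro h
        exact h13 ((hmaxprop d3 hd3m d1 hd1P (h ▸ hmdvd d1 hd1P)).symm)
      have hma : m ≠ a := by
        intro h
        exact hgea (Nat.dvd_antisymm hga (h ▸ hmg))
      have hmb : m ≠ b := by
        intro h
        exact hgeb (Nat.dvd_antisymm hgb (h ▸ hmg))
      have hmc : m ≠ c := by
        intro h
        exact hgec (Nat.dvd_antisymm hgc (h ▸ hmg))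
      have hand3 : a ≠ d3 := by
        intro h
        exact h13 ((hmaxprop d3 hd3m d1 hd1P (h ▸ had1)).symm)
      have hbnd2 : b ≠ d2 := by
        intro h
        exact h12 ((hmaxprop d2 hd2m d1 hd1P (h ▸ hbd1)).symm)
      have hcnd1 : c ≠ d1 := by
        intro h
        exact h12 (hmaxprop d1 hd1m d2 hd2P (h ▸ hcd2))
      have hab : a ≠ b := by
        intro h
        have had3 : a ∣ d3 := h ▸ hbd3
        have hac : a ∣ c := Nat.dvd_gcd had2 had3
        have hag : a ∣ g := Nat.dvd_gcd dvd_rfl hac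
        exact hgea (Nat.dvd_antisymm hga hag)
      have hanc : a ≠ c := by
        intro h
        apply hgea
        rw [hgdef, ← h, Nat.gcd_self]
      have hbc : b ≠ c := by
        intro h
        have hbd2 : b ∣ d2 := h ▸ hcd2
        have hba : b ∣ a := Nat.dvd_gcd hbd1 hbd2
        have hbg : b ∣ g := Nat.dvd_gcd hba (h ▸ dvd_rfl)
        exact hgeb (Nat.dvd_antisymm hgb hbg)
      have hsubQ : ({m, d1, d2, d3, a, b, c} : Finset ℕ) ⊆ P := by
        intro z hz
        simp only [mem_insert, mem_singleton] at hz
        rcases hz with rfl|rfl|rfl|rfl|rfl|rfl|rfl <;> assumption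
      have hcardQ : ({m, d1, d2, d3, a, b, c} : Finset ℕ).card = 7 := by
        rw [card_insert_of_notMem (by simp [hmd1, hmd2, hmd3, hma, hmb, hmc]),
            card_insert_of_notMem
              (by simp [h12, h13, Ne.symm hand1, Ne.symm hbnd1, Ne.symm hcnd1]),
            card_insert_of_notMem
              (by simp [h23, Ne.symm hand2, Ne.symm hbnd2, Ne.symm hcnd2]),
            card_insert_of_notMem
              (by simp [Ne.symm hand3, Ne.symm hbnd3, Ne.symm hcnd3]),
            card_insert_of_notMem (by simp [hab, hanc]),
            card_insert_of_notMem (by simp [hbc]),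
            card_singleton]
      have := card_le_card hsubQ
      omega
  -- now 4 ≤ s
  · have hs4 : 4 ≤ s := by omega
    have hmnotmax : m ∉ maxes := by
      intro hmm
      have hmax := (mem_filter.mp hmm).2
      have hPm : ∀ w ∈ P, w = m := fun w hw => (hmax w hw (hmdvd w hw)).symm
      have hsub : maxes ⊆ {m} := by
        intro z hz
        rw [mem_singleton]
        exact hPm z (hmaxP z hz)
      have := card_le_card hsub
      rw [card_singleton] at this
      omega
    have hins : insert m maxes ⊆ P := by
      intro z hz
      rcases mem_insert.mp hz with rfl | hz'
      · exact hm
      · exact hmaxP z hz'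
    have hcardins : (insert m maxes).card = s + 1 := by
      rw [card_insert_of_notMem hmnotmax]
    have hMcard : (P \ insert m maxes).card ≤ 1 := by
      rw [card_sdiff_of_subset hins]
      omega
    have hsle5 : s ≤ 5 := by
      have hsub : maxes ⊆ P.erase m := by
        intro z hz
        exact mem_erase.mpr ⟨fun h => hmnotmax (h ▸ hz), hmaxP z hz⟩
      have := card_le_card hsub
      rw [card_erase_of_mem hm] at this
      omega
    have hTm : P.filter (· ∣ m) = {m} := by
      ext z
      simp only [mem_filter, mem_singleton]
      constructor
      · rintro ⟨hz, hzm⟩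
        exact Nat.dvd_antisymm hzm (hmdvd z hz)
      · rintro rfl
        exact ⟨hm, dvd_rfl⟩
    have hβm : β m = (m:ℚ)⁻¹ := by
      have := hsys m hm
      rwa [hTm, sum_singleton] at this
    have hmpos := hpos m hm
    have hmq := inv_pos_nat hmpos
    have hmd : ∀ d ∈ maxes, m ≠ d := by
      intro d hd h
      exact hmnotmax (h ▸ hd)
    intro heq
    by_cases hMe : P \ insert m maxes = ∅
    · -- no middle element
      have hPeq : P = insert m maxes := by
        apply Subset.antisymm
        · intro v hv
          by_contra hvn
          have hvm : v ∈ P \ insert m maxes := mem_sdiff.mpr ⟨hv, hvn⟩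
          rw [hMe] at hvm
          exact notMem_empty v hvm
        · exact hins
      have hβd : ∀ d ∈ maxes, β d = (d:ℚ)⁻¹ - (m:ℚ)⁻¹ := by
        intro d hdm
        have hdP := hmaxP d hdm
        have hTd : P.filter (· ∣ d) = {m, d} := by
          ext z
          simp only [mem_filter, mem_insert, mem_singleton]
          constructor
          · rintro ⟨hz, hzd⟩
            rw [hPeq] at hz
            rcases mem_insert.mp hz with rfl | hz'
            · exact Or.inl rfl
            · exact Or.inr (hmaxprop z hz' d hdP hzd)
          · rintro (rfl | rfl)
            · exact ⟨hm, hmdvd d hdP⟩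
            · exact ⟨hdP, dvd_rfl⟩
        have hsum := hsys d hdP
        rw [hTd, sum_insert (by simp [hmd d hdm]), sum_singleton, hβm] at hsum
        linarith
      have hsplit : ∑ v ∈ P, β v = β m + ∑ d ∈ maxes, β d := by
        rw [hPeq, sum_insert hmnotmax]
      have hbd : ∑ d ∈ maxes, β d ≤ ∑ _d ∈ maxes, (-((m:ℚ)⁻¹/2)) := by
        apply sum_le_sum
        intro d hdm
        have h2 := inv_half_le hmpos (hpos d (hmaxP d hdm)) (hmdvd d (hmaxP d hdm)) (hmd d hdm)
        rw [hβd d hdm]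
        linarith
      rw [sum_const, nsmul_eq_mul, ← hs] at hbd
      have hscast : (4:ℚ) ≤ (s:ℚ) := by exact_mod_cast hs4
      have hprod : (s:ℚ) * (-((m:ℚ)⁻¹/2)) ≤ 4 * (-((m:ℚ)⁻¹/2)) := by nlinarith
      rw [hβm] at hsplit
      linarith
    · -- one middle element e
      have hMcard1 : (P \ insert m maxes).card = 1 := by
        have h1 : 0 < (P \ insert m maxes).card :=
          card_pos.mpr (nonempty_iff_ne_empty.mpr hMe)
        omega
      obtain ⟨e, he⟩ := card_eq_one.mp hMcard1
      have heM : e ∈ P \ insert m maxes := by rw [he]; exact mem_singleton_self e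
      have heP : e ∈ P := (mem_sdiff.mp heM).1
      have heni : e ∉ insert m maxes := (mem_sdiff.mp heM).2
      have hem : e ≠ m := fun h => heni (by rw [h]; exact mem_insert_self _ _)
      have henmax : e ∉ maxes := fun h => heni (mem_insert_of_mem h)
      have hepos := hpos e heP
      have heq2 := inv_half_le hmpos hepos (hmdvd e heP) (Ne.symm hem)
      have heqq := inv_pos_nat hepos
      have hPeq : P = insert m (insert e maxes) := by
        apply Subset.antisymm
        · intro v hv
          by_cases hvm : v ∈ insert m maxes
          · rcases mem_insert.mp hvm with rfl | hv'
            · exact mem_insert_self _ _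
            · exact mem_insert_of_mem (mem_insert_of_mem hv')
          · have : v ∈ P \ insert m maxes := mem_sdiff.mpr ⟨hv, hvm⟩
            rw [he, mem_singleton] at this
            rw [this]
            exact mem_insert_of_mem (mem_insert_self _ _)
        · intro v hv
          rcases mem_insert.mp hv with rfl | hv'
          · exact hm
          · rcases mem_insert.mp hv' with rfl | hv''
            · exact heP
            · exact hmaxP v hv''
      have hTe : P.filter (· ∣ e) = {m, e} := by
        ext z
        simp only [mem_filter, mem_insert, mem_singleton]
        constructor
        · rintro ⟨hz, hze⟩
          rw [hPeq] at hz
          rcases mem_insert.mp hz with rfl | hz'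
          · exact Or.inl rfl
          · rcases mem_insert.mp hz' with rfl | hz''
            · exact Or.inr rfl
            · exact absurd (hmaxprop z hz'' e heP hze ▸ hz'') henmax
        · rintro (rfl | rfl)
          · exact ⟨hm, hmdvd e heP⟩
          · exact ⟨heP, dvd_rfl⟩
      have hβe : β e = (e:ℚ)⁻¹ - (m:ℚ)⁻¹ := by
        have hsum := hsys e heP
        rw [hTe, sum_insert (by simp [Ne.symm hem]), sum_singleton, hβm] at hsum
        linarith
      have hβd : ∀ d ∈ maxes, β d = (d:ℚ)⁻¹ - (if e ∣ d then (e:ℚ)⁻¹ else (m:ℚ)⁻¹) := by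
        intro d hdm
        have hdP := hmaxP d hdm
        have hed' : e ≠ d := fun h => henmax (h ▸ hdm)
        by_cases hed : e ∣ d
        · have hTd : P.filter (· ∣ d) = {m, e, d} := by
            ext z
            simp only [mem_filter, mem_insert, mem_singleton]
            constructor
            · rintro ⟨hz, hzd⟩
              rw [hPeq] at hz
              rcases mem_insert.mp hz with rfl | hz'
              · exact Or.inl rfl
              · rcases mem_insert.mp hz' with rfl | hz''
                · exact Or.inr (Or.inl rfl)
                · exact Or.inr (Or.inr (hmaxprop z hz'' d hdP hzd))
            · rintro (rfl | rfl | rfl)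
              · exact ⟨hm, hmdvd d hdP⟩
              · exact ⟨heP, hed⟩
              · exact ⟨hdP, dvd_rfl⟩
          have hsum := hsys d hdP
          rw [hTd, sum_insert (by simp [Ne.symm hem, hmd d hdm]),
            sum_insert (by simp [hed']), sum_singleton, hβm, hβe] at hsum
          rw [if_pos hed]
          linarith
        · have hTd : P.filter (· ∣ d) = {m, d} := by
            ext z
            simp only [mem_filter, mem_insert, mem_singleton]
            constructor
            · rintro ⟨hz, hzd⟩
              rw [hPeq] at hz
              rcases mem_insert.mp hz with rfl | hz'
              · exact Or.inl rfl
              · rcases mem_insert.mp hz' with rfl | hz''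
                · exact absurd hzd hed
                · exact Or.inr (hmaxprop z hz'' d hdP hzd)
            · rintro (rfl | rfl)
              · exact ⟨hm, hmdvd d hdP⟩
              · exact ⟨hdP, dvd_rfl⟩
          have hsum := hsys d hdP
          rw [hTd, sum_insert (by simp [hmd d hdm]), sum_singleton, hβm] at hsum
          rw [if_neg hed]
          linarith
      -- split maxes by divisibility by e
      set F := maxes.filter (fun d => e ∣ d) with hF
      set a := F.card with ha
      have ha1 : 1 ≤ a := by
        obtain ⟨d, hdm, hed⟩ := exmax e heP
        exact card_pos.mpr ⟨d, mem_filter.mpr ⟨hdm, hed⟩⟩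
      have haS : a ≤ s := card_le_card (filter_subset _ _)
      have hcards : a + (maxes.filter (fun d => ¬ e ∣ d)).card = s :=
        card_filter_add_card_filter_not _
      have hsplitmax := sum_filter_add_sum_filter_not maxes (fun d => e ∣ d) β
      have hbF : ∑ d ∈ F, β d ≤ ∑ _d ∈ F, (-((e:ℚ)⁻¹/2)) := by
        apply sum_le_sum
        intro d hdF
        have hdm := (mem_filter.mp hdF).1
        have hed := (mem_filter.mp hdF).2
        have hed' : e ≠ d := fun h => henmax (h ▸ hdm)
        have h2 := inv_half_le hepos (hpos d (hmaxP d hdm)) hed hed'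
        rw [hβd d hdm, if_pos hed]
        linarith
      have hbNF : ∑ d ∈ maxes.filter (fun d => ¬ e ∣ d), β d
          ≤ ∑ _d ∈ maxes.filter (fun d => ¬ e ∣ d), (-((m:ℚ)⁻¹/2)) := by
        apply sum_le_sum
        intro d hdF
        have hdm := (mem_filter.mp hdF).1
        have hed := (mem_filter.mp hdF).2
        have h2 := inv_half_le hmpos (hpos d (hmaxP d hdm)) (hmdvd d (hmaxP d hdm)) (hmd d hdm)
        rw [hβd d hdm, if_neg hed]
        linarith
      rw [sum_const, nsmul_eq_mul, ← ha] at hbF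
      rw [sum_const, nsmul_eq_mul] at hbNF
      have hmni : m ∉ insert e maxes := by
        intro h
        rcases mem_insert.mp h with h' | h'
        · exact hem h'.symm
        · exact hmnotmax h'
      have hsplit : ∑ v ∈ P, β v = β m + (β e + ∑ d ∈ maxes, β d) := by
        rw [hPeq, sum_insert hmni, sum_insert henmax]
      have hNFcard : (((maxes.filter (fun d => ¬ e ∣ d)).card : ℕ) : ℚ)
          = (s:ℚ) - (a:ℚ) := by
        have hnn : (maxes.filter (fun d => ¬ e ∣ d)).card = s - a := by omega
        rw [hnn, Nat.cast_sub haS]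
      rw [hNFcard] at hbNF
      have hfin : ∑ v ∈ P, β v
          ≤ (e:ℚ)⁻¹ - (a:ℚ) * ((e:ℚ)⁻¹/2) - ((s:ℚ) - (a:ℚ)) * ((m:ℚ)⁻¹/2) := by
        rw [hsplit, hβm, hβe]
        linarith [hsplitmax]
      rw [heq] at hfin
      clear_value s a
      interval_cases s <;> interval_cases a <;> (push_cast at hfin; linarith)

end S12aux

open S12aux


theorem stmt12 (S : Finset ℕ) (h0 : 0 ∉ S)
    (n : ℕ) (hn : S.card = n) (hn8 : 8 ≤ n)
    -- `S` is an `(n-7)`-fold GCD closed set: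
    (R : Finset ℕ) (hRS : R ⊆ S) (hRcard : R.card = n - 7)
    (hRchain : IsChain (· ∣ ·) (↑R : Set ℕ))
    (hRne : R.Nonempty) (hSRne : (S \ R).Nonempty)
    (hmaxmin : R.max' hRne ∣ (S \ R).min' hSRne)
    (hSRgcd : ∀ a ∈ S \ R, ∀ b ∈ S \ R, Nat.gcd a b ∈ S \ R) :
    (Matrix.of fun a b : {x // x ∈ S} => (Nat.lcm a.1 b.1 : ℚ)).det ≠ 0 := by
  classical
  set q := n - 7 with hqdef
  have hq1 : 1 ≤ q := by omega
  have hqn : q < n := by omega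
  set e := S.orderIsoOfFin hn with he
  set x : ℕ → ℕ := fun k => if h : k < n then (e ⟨k, h⟩ : ℕ) else 0 with hx
  have hxe : ∀ i : Fin n, x (i : ℕ) = (e i : ℕ) := by
    intro i
    rw [hx]
    simp only [dif_pos i.isLt, Fin.eta]
  have hxmem : ∀ k, k < n → x k ∈ S := by
    intro k hk
    rw [hx]
    simp only [dif_pos hk]
    exact (e ⟨k, hk⟩).2
  have hxpos : ∀ k, k < n → 0 < x k := by
    intro k hk
    exact Nat.pos_of_ne_zero (fun h => h0 (h ▸ hxmem k hk))
  have hxmono : ∀ i j, i < j → j < n → x i < x j := by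
    intro i j hij hj
    have hi : i < n := lt_trans hij hj
    rw [hx]
    simp only [dif_pos hi, dif_pos hj]
    have hlt : (⟨i, hi⟩ : Fin n) < ⟨j, hj⟩ := Fin.mk_lt_mk.mpr hij
    exact e.strictMono hlt
  have hxinj : ∀ i j, i < n → j < n → x i = x j → i = j := by
    intro i j hi hj hxy
    rcases lt_trichotomy i j with h | h | h
    · exact absurd hxy (Nat.ne_of_lt (hxmono i j h hj))
    · exact h
    · exact absurd hxy.symm (Nat.ne_of_lt (hxmono j i h hi))
  have hsurj : ∀ y ∈ S, ∃ k, k < n ∧ x k = y := by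
    intro y hy
    obtain ⟨i, hi⟩ := e.surjective ⟨y, hy⟩
    exact ⟨(i : ℕ), i.isLt, by rw [hxe i, hi]⟩
  set W := S \ R with hW
  have hWcard : W.card = 7 := by
    rw [hW, card_sdiff_of_subset hRS, hn, hRcard]
    omega
  have hWS : W ⊆ S := sdiff_subset
  have hWpos : ∀ y ∈ W, 0 < y := fun y hy => Nat.pos_of_ne_zero (fun h => h0 (h ▸ hWS hy))
  have hminpos : 0 < W.min' hSRne := hWpos _ (min'_mem _ _)
  have hmindvd : ∀ y ∈ W, W.min' hSRne ∣ y := by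
    intro y hy
    have hg : Nat.gcd (W.min' hSRne) y ∈ W := hSRgcd _ (min'_mem _ _) _ hy
    have h1 : Nat.gcd (W.min' hSRne) y ∣ W.min' hSRne := Nat.gcd_dvd_left _ _
    have h2 : W.min' hSRne ≤ Nat.gcd (W.min' hSRne) y := min'_le _ _ hg
    have h3 : Nat.gcd (W.min' hSRne) y ≤ W.min' hSRne := Nat.le_of_dvd hminpos h1
    have h4 : Nat.gcd (W.min' hSRne) y = W.min' hSRne := le_antisymm h3 h2
    rw [← h4]
    exact Nat.gcd_dvd_right _ _
  have hRpos : ∀ a ∈ R, 0 < a := fun a ha => Nat.pos_of_ne_zero (fun h => h0 (h ▸ hRS ha))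
  have hRchain' : ∀ a ∈ R, ∀ b ∈ R, a ≤ b → a ∣ b := by
    intro a ha b hb hab
    rcases eq_or_ne a b with rfl | hne
    · exact dvd_rfl
    rcases hRchain ha hb hne with h | h
    · exact h
    · have := Nat.le_of_dvd (hRpos a ha) h
      have : a = b := by omega
      rw [this]
  have hRdvdW : ∀ a ∈ R, ∀ y ∈ W, a ∣ y := by
    intro a ha y hy
    have h1 : a ∣ R.max' hRne := hRchain' a ha _ (max'_mem _ _) (le_max' _ _ ha)
    exact (h1.trans hmaxmin).trans (hmindvd y hy)
  have hRltW : ∀ a ∈ R, ∀ y ∈ W, a < y := by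
    intro a ha y hy
    have h1 := Nat.le_of_dvd (hWpos y hy) (hRdvdW a ha y hy)
    have h2 : a ≠ y := fun h => (mem_sdiff.mp hy).2 (h ▸ ha)
    omega
  -- the first q indices are exactly R
  have hidxR : ∀ k, k < n → (x k ∈ R ↔ k < q) := by
    have hWmem : ∀ k, k < n → x k ∉ R → x k ∈ W := by
      intro k hk hkR
      rw [hW, mem_sdiff]
      exact ⟨hxmem k hk, hkR⟩
    set A := (Finset.range n).filter (fun k => x k ∈ R) with hA
    have hAcard : A.card = q := by
      rw [← hRcard, ← hqdef] at *
      rw [hA]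
      apply Finset.card_bij (fun k _ => x k)
      · intro k hk
        exact (mem_filter.mp hk).2
      · intro k hk k' hk' hxx
        exact hxinj k k' (mem_range.mp (mem_filter.mp hk).1)
          (mem_range.mp (mem_filter.mp hk').1) hxx
      · intro r hr
        obtain ⟨k, hkn, hk⟩ := hsurj r (hRS hr)
        exact ⟨k, mem_filter.mpr ⟨mem_range.mpr hkn, hk ▸ hr⟩, hk⟩
    have hdc : ∀ k l, k < n → l < n → k ≤ l → x l ∈ R → x k ∈ R := by
      intro k l hk hl hkl hlR
      by_contra hkR
      have hkW := hWmem k hk hkR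
      have := hRltW (x l) hlR (x k) hkW
      rcases eq_or_lt_of_le hkl with rfl | hlt
      · omega
      · have := hxmono k l hlt hl
        omega
    intro k hk
    constructor
    · intro hkR
      have hsub : Finset.range (k+1) ⊆ A := by
        intro j hj
        have hjk : j ≤ k := by
          have := mem_range.mp hj
          omega
        have hjn : j < n := by omega
        exact mem_filter.mpr ⟨mem_range.mpr hjn, hdc j k hjn hk hjk hkR⟩
      have := card_le_card hsub
      rw [card_range, hAcard] at this
      omega
    · intro hkq
      by_contra hkR
      have hsub : A ⊆ Finset.range k := by
        intro j hj
        have hjn := mem_range.mp (mem_filter.mp hj).1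
        have hjR := (mem_filter.mp hj).2
        rw [mem_range]
        by_contra hjk
        push_neg at hjk
        exact hkR (hdc k j hk hjn hjk hjR)
      have := card_le_card hsub
      rw [card_range, hAcard] at this
      omega
  have hxW : ∀ k, q ≤ k → k < n → x k ∈ W := by
    intro k hkq hkn
    rw [hW, mem_sdiff]
    refine ⟨hxmem k hkn, fun h => ?_⟩
    have := (hidxR k hkn).mp h
    omega
  have hdvdlow : ∀ j k, j < q → k < n → j < k → x j ∣ x k := by
    intro j k hj hk hjk
    have hjn : j < n := by omega
    have hxjR : x j ∈ R := (hidxR j hjn).mpr hj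
    by_cases hkq : k < q
    · exact hRchain' _ hxjR _ ((hidxR k hk).mpr hkq) (le_of_lt (hxmono j k hjk hk))
    · exact hRdvdW _ hxjR _ (hxW k (by omega) hk)
  have hxqW : x q ∈ W := hxW q le_rfl hqn
  have hxqmin : x q = W.min' hSRne := by
    obtain ⟨k0, hk0n, hk0⟩ := hsurj (W.min' hSRne) (hWS (min'_mem _ _))
    have hk0q : q ≤ k0 := by
      by_contra h
      push_neg at h
      have h1 : x k0 ∈ R := (hidxR k0 hk0n).mpr h
      rw [hk0] at h1
      exact (mem_sdiff.mp (min'_mem W hSRne)).2 h1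
    have h1 : W.min' hSRne ≤ x q := min'_le _ _ hxqW
    rcases eq_or_lt_of_le hk0q with rfl | hlt
    · exact hk0
    · have := hxmono q k0 hlt hk0n
      omega
  have hxqdvd : ∀ k, q ≤ k → k < n → x q ∣ x k := by
    intro k hkq hkn
    rw [hxqmin]
    exact hmindvd _ (hxW k hkq hkn)
  -- telescoping sums along the chain
  have tel : ∀ k, k ≤ q → ∑ j ∈ Finset.range (k+1), alph x j = (x k : ℚ)⁻¹ := by
    intro k hk
    have hk' : k < n := by omega
    have hML := ML x n k hk' hxpos hxmono
    have hset : (Finset.range n).filter (fun j => x j ∣ x k) = Finset.range (k+1) := by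
      ext j
      simp only [mem_filter, mem_range]
      constructor
      · rintro ⟨hj, hdvd⟩
        by_contra hjk
        push_neg at hjk
        have h1 := hxmono k j (by omega) hj
        have := Nat.le_of_dvd (hxpos k hk') hdvd
        omega
      · intro hj
        rcases eq_or_lt_of_le (by omega : j ≤ k) with rfl | hlt
        · exact ⟨by omega, dvd_rfl⟩
        · exact ⟨by omega, hdvdlow j k (by omega) hk' hlt⟩
    rw [hset] at hML
    exact hML
  have hαval : ∀ k, 1 ≤ k → k ≤ q → alph x k = (x k : ℚ)⁻¹ - (x (k-1) : ℚ)⁻¹ := by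
    intro k h1 hkq
    have t1 := tel k hkq
    have t2 := tel (k-1) (by omega)
    rw [Finset.sum_range_succ] at t1
    have hrepl : k - 1 + 1 = k := by omega
    rw [hrepl] at t2
    rw [t2] at t1
    linarith
  have hαlow : ∀ k, k ≤ q → alph x k ≠ 0 := by
    intro k hk
    rcases Nat.eq_zero_or_pos k with rfl | h1
    · have h2 := tel 0 (by omega)
      rw [Finset.sum_range_one] at h2
      rw [h2]
      exact ne_of_gt (inv_pos_nat (hxpos 0 (by omega)))
    · rw [hαval k h1 hk]
      have h2 := inv_lt_inv_nat (hxpos (k-1) (by omega)) (hxmono (k-1) k (by omega) (by omega))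
      intro h
      rw [sub_eq_zero] at h
      rw [h] at h2
      exact lt_irrefl _ h2
  -- the β coefficients on W
  set β : ℕ → ℚ := fun v =>
    if hv : v ∈ S then
      (if ((e.symm ⟨v, hv⟩ : Fin n) : ℕ) = q then (x q : ℚ)⁻¹
       else alph x ((e.symm ⟨v, hv⟩ : Fin n) : ℕ))
    else 0 with hβ
  have hesymm : ∀ k (hk : k < n), (e.symm ⟨x k, hxmem k hk⟩ : Fin n) = ⟨k, hk⟩ := by
    intro k hk
    rw [OrderIso.symm_apply_eq]
    apply Subtype.ext
    exact hxe ⟨k, hk⟩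
  have hβx : ∀ k, k < n → β (x k) = if k = q then (x q : ℚ)⁻¹ else alph x k := by
    intro k hk
    rw [hβ]
    simp only [dif_pos (hxmem k hk)]
    rw [hesymm k hk]
  have hβq : β (x q) = (x q : ℚ)⁻¹ := by
    rw [hβx q hqn, if_pos rfl]
  -- the β system on W
  have hJsum : ∀ k, q ≤ k → k < n →
      ∑ j ∈ (Finset.range n).filter (fun j => q ≤ j ∧ x j ∣ x k), alph x j
        = (x k : ℚ)⁻¹ - (x (q-1) : ℚ)⁻¹ := by
    intro k hkq hkn
    have hML := ML x n k hkn hxpos hxmono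
    have hsplit : (Finset.range n).filter (fun j => x j ∣ x k)
        = Finset.range q ∪ (Finset.range n).filter (fun j => q ≤ j ∧ x j ∣ x k) := by
      ext j
      simp only [mem_union, mem_filter, mem_range]
      constructor
      · rintro ⟨hj, hdvd⟩
        by_cases hjq : j < q
        · exact Or.inl hjq
        · exact Or.inr ⟨hj, by omega, hdvd⟩
      · rintro (hjq | ⟨hj, _, hdvd⟩)
        · have hjn : j < n := by omega
          exact ⟨hjn, hdvdlow j k hjq hkn (by omega)⟩
        · exact ⟨hj, hdvd⟩
    have hdisj : Disjoint (Finset.range q)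
        ((Finset.range n).filter (fun j => q ≤ j ∧ x j ∣ x k)) := by
      rw [disjoint_left]
      intro j hj hj'
      have h1 := mem_range.mp hj
      have h2 := (mem_filter.mp hj').2.1
      omega
    rw [hsplit, sum_union hdisj] at hML
    have htel := tel (q-1) (by omega)
    have hrepl : q - 1 + 1 = q := by omega
    rw [hrepl] at htel
    rw [htel] at hML
    linarith
  have hWidx : ∀ v ∈ W, ∃ k, q ≤ k ∧ k < n ∧ x k = v := by
    intro v hv
    obtain ⟨k, hkn, hk⟩ := hsurj v (hWS hv)
    refine ⟨k, ?_, hkn, hk⟩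
    by_contra h
    push_neg at h
    have h1 : x k ∈ R := (hidxR k hkn).mpr h
    rw [hk] at h1
    exact (mem_sdiff.mp hv).2 h1
  have hWfilter : ∀ k, q ≤ k → k < n →
      W.filter (· ∣ x k)
        = ((Finset.range n).filter (fun j => q ≤ j ∧ x j ∣ x k)).image x := by
    intro k hkq hkn
    ext v
    simp only [mem_filter, mem_image, mem_range]
    constructor
    · rintro ⟨hvW, hvd⟩
      obtain ⟨j, hjq, hjn, hj⟩ := hWidx v hvW
      exact ⟨j, ⟨hjn, hjq, hj ▸ hvd⟩, hj⟩
    · rintro ⟨j, ⟨hjn, hjq, hjd⟩, rfl⟩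
      exact ⟨hxW j hjq hjn, hjd⟩
  have hsysW : ∀ v ∈ W, ∑ w ∈ W.filter (· ∣ v), β w = (v : ℚ)⁻¹ := by
    intro v hv
    obtain ⟨k, hkq, hkn, rfl⟩ := hWidx v hv
    rw [hWfilter k hkq hkn]
    rw [Finset.sum_image (by
      intro j hj j' hj' hxx
      exact hxinj j j' (mem_range.mp (mem_filter.mp hj).1)
        (mem_range.mp (mem_filter.mp hj').1) hxx)]
    have hterm : ∀ j ∈ (Finset.range n).filter (fun j => q ≤ j ∧ x j ∣ x k),
        β (x j) = alph x j + (if j = q then (x q : ℚ)⁻¹ - alph x j else 0) := by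
      intro j hj
      have hjn := mem_range.mp (mem_filter.mp hj).1
      rw [hβx j hjn]
      by_cases hjq : j = q
      · rw [if_pos hjq, if_pos hjq]
        ring
      · rw [if_neg hjq, if_neg hjq]
        ring
    rw [Finset.sum_congr rfl hterm, Finset.sum_add_distrib]
    rw [Finset.sum_ite_eq' _ q (fun j => (x q : ℚ)⁻¹ - alph x j)]
    have hqmem : q ∈ (Finset.range n).filter (fun j => q ≤ j ∧ x j ∣ x k) :=
      mem_filter.mpr ⟨mem_range.mpr hqn, le_rfl, hxqdvd k hkq hkn⟩
    rw [if_pos hqmem, hJsum k hkq hkn]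
    have hαq := hαval q hq1 le_rfl
    rw [hαq]
    ring
  -- nonzero coefficients above level q
  have hαhigh : ∀ k, q < k → k < n → alph x k ≠ 0 := by
    intro k hkq hkn hzero
    have hxkW : x k ∈ W := hxW k (by omega) hkn
    set P : Finset ℕ := (W.filter (· ∣ x k)).erase (x k) with hP
    have hPsub : ∀ w ∈ P, w ∈ W ∧ w ∣ x k ∧ w ≠ x k := by
      intro w hw
      have h1 := mem_erase.mp hw
      have h2 := mem_filter.mp h1.2
      exact ⟨h2.1, h2.2, h1.1⟩
    have hxkpos := hxpos k hkn
    have hcard : P.card ≤ 6 := by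
      have hsub : P ⊆ W.erase (x k) := by
        rw [hP]
        exact erase_subset_erase _ (filter_subset _ _)
      have := card_le_card hsub
      rw [card_erase_of_mem hxkW, hWcard] at this
      omega
    have hposP : ∀ v ∈ P, 0 < v := fun v hv => hWpos v (hPsub v hv).1
    have hltP : ∀ v ∈ P, v < x k := by
      intro v hv
      obtain ⟨h1, h2, h3⟩ := hPsub v hv
      have := Nat.le_of_dvd hxkpos h2
      omega
    have hmeetP : ∀ a ∈ P, ∀ b ∈ P, Nat.gcd a b ∈ P := by
      intro a ha b hb
      obtain ⟨ha1, ha2, _⟩ := hPsub a ha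
      obtain ⟨hb1, hb2, _⟩ := hPsub b hb
      have hg1 : Nat.gcd a b ∈ W := hSRgcd a ha1 b hb1
      have hg2 : Nat.gcd a b ∣ x k := (Nat.gcd_dvd_left a b).trans ha2
      have hg3 : Nat.gcd a b ≠ x k := by
        have := Nat.le_of_dvd (hposP a ha) (Nat.gcd_dvd_left a b)
        have := hltP a ha
        omega
      rw [hP]
      exact mem_erase.mpr ⟨hg3, mem_filter.mpr ⟨hg1, hg2⟩⟩
    have hmP : x q ∈ P := by
      rw [hP]
      refine mem_erase.mpr ⟨?_, mem_filter.mpr ⟨hxqW, hxqdvd k (by omega) hkn⟩⟩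
      intro h
      have := hxmono q k hkq hkn
      omega
    have hmdvdP : ∀ v ∈ P, x q ∣ v := by
      intro v hv
      rw [hxqmin]
      exact hmindvd v (hPsub v hv).1
    have hsysP : ∀ v ∈ P, ∑ w ∈ P.filter (· ∣ v), β w = (v : ℚ)⁻¹ := by
      intro v hv
      obtain ⟨hvW, hvd, hvne⟩ := hPsub v hv
      have hfeq : P.filter (· ∣ v) = W.filter (· ∣ v) := by
        ext z
        simp only [hP, mem_filter, mem_erase]
        constructor
        · rintro ⟨⟨h1, h2, h3⟩, h4⟩
          exact ⟨h2, h4⟩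
        · rintro ⟨h1, h2⟩
          have hz3 : z ∣ x k := h2.trans hvd
          have hz4 : z ≠ x k := by
            intro hzk
            rw [hzk] at h2
            have := Nat.le_of_dvd (hWpos v hvW) h2
            have := hltP v hv
            omega
          exact ⟨⟨hz4, h1, hz3⟩, h2⟩
      rw [hfeq]
      exact hsysW v hvW
    have hcore := core P hcard hposP hmeetP (x q) hmP hmdvdP (x k) hxkpos
      (fun v hv => (hPsub v hv).2.1) (fun v hv => (hPsub v hv).2.2) β hsysP
    have hfull := hsysW (x k) hxkW
    have hxk_in : x k ∈ W.filter (· ∣ x k) := mem_filter.mpr ⟨hxkW, dvd_rfl⟩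
    rw [← Finset.insert_erase hxk_in, Finset.sum_insert (notMem_erase _ _)] at hfull
    have hβk : β (x k) = 0 := by
      rw [hβx k hkn, if_neg (by omega)]
      exact hzero
    rw [hβk, zero_add] at hfull
    exact hcore hfull
  have hαne : ∀ k, k < n → alph x k ≠ 0 := by
    intro k hk
    by_cases hkq : k ≤ q
    · exact hαlow k hkq
    · exact hαhigh k (by omega) hk
  -- S itself is GCD closed
  have hSgcd : ∀ a ∈ S, ∀ b ∈ S, Nat.gcd a b ∈ S := by
    intro a ha b hb
    by_cases haR : a ∈ R
    · by_cases hbR : b ∈ R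
      · rcases le_total a b with h | h
        · rw [Nat.gcd_eq_left (hRchain' a haR b hbR h)]
          exact ha
        · rw [Nat.gcd_eq_right (hRchain' b hbR a haR h)]
          exact hb
      · have hbW : b ∈ W := mem_sdiff.mpr ⟨hb, hbR⟩
        rw [Nat.gcd_eq_left (hRdvdW a haR b hbW)]
        exact ha
    · have haW : a ∈ W := mem_sdiff.mpr ⟨ha, haR⟩
      by_cases hbR : b ∈ R
      · rw [Nat.gcd_eq_right (hRdvdW b hbR a haW)]
        exact hb
      · exact hWS (hSRgcd a haW b (mem_sdiff.mpr ⟨hb, hbR⟩))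
  -- reindex the matrix by Fin n
  have hdet : (Matrix.of fun a b : {x // x ∈ S} => (Nat.lcm a.1 b.1 : ℚ)).det
      = (Matrix.of fun i j : Fin n => (Nat.lcm (x i) (x j) : ℚ)).det := by
    have hsub := Matrix.det_submatrix_equiv_self e.toEquiv
      (Matrix.of fun a b : {x // x ∈ S} => (Nat.lcm a.1 b.1 : ℚ))
    rw [← hsub]
    congr 1
    ext i j
    simp only [Matrix.submatrix_apply, Matrix.of_apply, hxe]
    rfl
  have hgcdpos : ∀ i j : Fin n, 0 < Nat.gcd (x i) (x j) :=
    fun i j => Nat.gcd_pos_of_pos_left _ (hxpos i i.isLt)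
  have hL : (Matrix.of fun i j : Fin n => (Nat.lcm (x i) (x j) : ℚ))
      = Matrix.diagonal (fun i : Fin n => (x i : ℚ))
        * (Matrix.of (fun i j : Fin n => ((Nat.gcd (x i) (x j) : ℕ) : ℚ)⁻¹))
        * Matrix.diagonal (fun i : Fin n => (x i : ℚ)) := by
    ext i j
    rw [Matrix.mul_diagonal, Matrix.diagonal_mul, Matrix.of_apply, Matrix.of_apply]
    have hg0 : ((Nat.gcd (x i) (x j) : ℕ) : ℚ) ≠ 0 := by
      have := hgcdpos i j
      exact_mod_cast this.ne'
    have hlg : ((Nat.gcd (x i) (x j) : ℕ) : ℚ) * (Nat.lcm (x i) (x j) : ℚ)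
        = (x i : ℚ) * (x j : ℚ) := by
      exact_mod_cast congrArg (fun t : ℕ => (t : ℚ)) (Nat.gcd_mul_lcm (x i) (x j))
    field_simp
    linear_combination hlg
  have hAE : (Matrix.of (fun i j : Fin n => ((Nat.gcd (x i) (x j) : ℕ) : ℚ)⁻¹))
      = (Matrix.of (fun i k : Fin n => if x k ∣ x i then (1:ℚ) else 0))
        * Matrix.diagonal (fun k : Fin n => alph x k)
        * (Matrix.of (fun i k : Fin n => if x k ∣ x i then (1:ℚ) else 0)).transpose := by
    ext i j
    rw [Matrix.mul_apply]
    simp only [Matrix.mul_diagonal, Matrix.transpose_apply, Matrix.of_apply]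
    have hterm : ∀ k : Fin n,
        (if x k ∣ x i then (1:ℚ) else 0) * alph x k * (if x k ∣ x j then (1:ℚ) else 0)
          = if x k ∣ Nat.gcd (x i) (x j) then alph x k else 0 := by
      intro k
      by_cases h1 : x k ∣ x i
      · by_cases h2 : x k ∣ x j
        · rw [if_pos h1, if_pos h2, if_pos (Nat.dvd_gcd h1 h2)]
          ring
        · rw [if_pos h1, if_neg h2, if_neg (fun h : x (k:ℕ) ∣ Nat.gcd (x (i:ℕ)) (x (j:ℕ)) => h2 (h.trans (Nat.gcd_dvd_right _ _)))]
          ring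
      · rw [if_neg h1, if_neg (fun h : x (k:ℕ) ∣ Nat.gcd (x (i:ℕ)) (x (j:ℕ)) => h1 (h.trans (Nat.gcd_dvd_left _ _)))]
        ring
    rw [Finset.sum_congr rfl (fun k _ => hterm k)]
    rw [Fin.sum_univ_eq_sum_range (fun k => if x k ∣ Nat.gcd (x i) (x j) then alph x k else 0) n]
    rw [← Finset.sum_filter]
    obtain ⟨l, hln, hl⟩ := hsurj (Nat.gcd (x i) (x j))
      (hSgcd _ (hxmem i i.isLt) _ (hxmem j j.isLt))
    rw [← hl]
    exact (ML x n l hln hxpos hxmono).symm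
  have hEt : ((Matrix.of (fun i k : Fin n => if x k ∣ x i then (1:ℚ) else 0))).transpose.det
      = 1 := by
    have htri : (Matrix.of (fun i k : Fin n =>
        if x k ∣ x i then (1:ℚ) else 0)).transpose.BlockTriangular id := by
      intro i j hij
      rw [Matrix.transpose_apply, Matrix.of_apply, if_neg]
      intro hdvd
      have h1 : (j : ℕ) < (i : ℕ) := hij
      have h2 := hxmono j i h1 i.isLt
      have h3 := Nat.le_of_dvd (hxpos j j.isLt) hdvd
      omega
    rw [Matrix.det_of_upperTriangular htri]
    apply Finset.prod_eq_one
    intro i _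
    rw [Matrix.transpose_apply, Matrix.of_apply, if_pos dvd_rfl]
  have hdetE : (Matrix.of (fun i k : Fin n => if x k ∣ x i then (1:ℚ) else 0)).det = 1 := by
    rw [← Matrix.det_transpose]
    exact hEt
  have hprodx : (∏ i : Fin n, (x i : ℚ)) ≠ 0 := by
    apply Finset.prod_ne_zero_iff.mpr
    intro i _
    have := hxpos i i.isLt
    exact_mod_cast this.ne'
  have hprodα : (∏ i : Fin n, alph x (i : ℕ)) ≠ 0 := by
    apply Finset.prod_ne_zero_iff.mpr
    intro i _
    exact hαne i i.isLt
  rw [hdet, hL, hAE]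
  simp only [Matrix.det_mul, Matrix.det_diagonal, hdetE, hEt, one_mul, mul_one]
  exact mul_ne_zero (mul_ne_zero hprodx hprodα) hprodx
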